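/- Let M > 1, let ε ∈ (0,1), let A be an n×n real symmetric positive definite matrix with condition number ‖A‖·‖A^{−1}‖ ≤ M, and let b ∈ ℝ^n with ‖b‖ = 1. If the integer k satisfies k ≥ ln((1 + √(1−ε²))/ε) / ln((√M + 1)/(√M − 1)), then there exists x in the Krylov subspace span{b, Ab, …, A^{k−1} b} with ‖A x − b‖ ≤ ε. That is, for the class F₁ of symmetric positive definite matrices with condition number at most M, the minimal residual algorithm computes an ε-approximation within ⌈ln((1+(1−ε²)^{1/2})/ε) / ln((M^{1/2}+1)/(M^{1/2}−1))⌉ Krylov steps. -/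

import Mathlib

open Polynomial Matrix

/-- The Euclidean norm on `ℝ^n`. -/
noncomputable def euclNorm {n : ℕ} (v : Fin n → ℝ) : ℝ := Real.sqrt (∑ i, v i ^ 2)

/-- The spectral norm of an `n × n` real matrix: the operator norm induced by the
Euclidean norm. -/
noncomputable def specNorm {n : ℕ} (A : Matrix (Fin n) (Fin n) ℝ) : ℝ :=
  ‖LinearMap.toContinuousLinearMap (Matrix.toEuclideanLin A)‖

lemma cheb_half (s : ℝ) (hs : s ≠ 0) (k : ℕ) :
    (Polynomial.Chebyshev.T ℝ k).eval ((s + s⁻¹)/2) = (s^k + (s⁻¹)^k)/2 := by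
  induction k using Nat.twoStepInduction with
  | zero => simp [Polynomial.Chebyshev.T_zero]
  | one => simp [Polynomial.Chebyshev.T_one]
  | more k ih1 ih2 =>
    have h := Polynomial.Chebyshev.T_add_two ℝ (k : ℤ)
    have : ((k : ℤ) + 2) = ((k + 2 : ℕ) : ℤ) := by push_cast; ring
    rw [this] at h
    have h1 : ((k : ℤ) + 1) = ((k + 1 : ℕ) : ℤ) := by push_cast; ring
    rw [h1] at h
    rw [h]
    simp only [Polynomial.eval_sub, Polynomial.eval_mul, Polynomial.eval_ofNat,
      Polynomial.eval_X]
    rw [ih2, ih1]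
    have hss : s * s⁻¹ = 1 := mul_inv_cancel₀ hs
    linear_combination (s⁻¹ ^ k + s ^ k) / 2 * hss


lemma cheb_abs_le (x : ℝ) (hx : x ∈ Set.Icc (-1 : ℝ) 1) (k : ℕ) :
    |(Polynomial.Chebyshev.T ℝ k).eval x| ≤ 1 := by
  obtain ⟨h1, h2⟩ := hx
  have := Polynomial.Chebyshev.T_real_cos (Real.arccos x) (k : ℤ)
  rw [Real.cos_arccos h1 h2] at this
  rw [this]
  exact Real.abs_cos_le_one _


lemma cheb_natDegree_le (k : ℕ) : (Polynomial.Chebyshev.T ℝ k).natDegree ≤ k := by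
  induction k using Nat.twoStepInduction with
  | zero => simp [Polynomial.Chebyshev.T_zero]
  | one => simp [Polynomial.Chebyshev.T_one]
  | more k ih1 ih2 =>
    have h := Polynomial.Chebyshev.T_add_two ℝ (k : ℤ)
    have h2 : ((k : ℤ) + 2) = ((k + 2 : ℕ) : ℤ) := by push_cast; ring
    have h1 : ((k : ℤ) + 1) = ((k + 1 : ℕ) : ℤ) := by push_cast; ring
    rw [h2, h1] at h
    rw [h]
    refine (Polynomial.natDegree_sub_le _ _).trans ?_
    simp only [max_le_iff]
    constructor
    · refine (Polynomial.natDegree_mul_le).trans ?_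
      have : ((2 : ℝ[X]) * X).natDegree ≤ 1 := by
        refine (Polynomial.natDegree_mul_le).trans ?_
        simp
      omega
    · omega


lemma add_inv_mono {u v : ℝ} (hu : 1 ≤ u) (huv : u ≤ v) : u + u⁻¹ ≤ v + v⁻¹ := by
  have hu0 : 0 < u := by linarith
  have hv0 : 0 < v := by linarith
  have h3 : 1 ≤ u * v := by nlinarith
  have h : (u + u⁻¹) * (u * v) ≤ (v + v⁻¹) * (u * v) := by
    have e1 : (u + u⁻¹) * (u * v) = u * u * v + v := by field_simp
    have e2 : (v + v⁻¹) * (u * v) = v * v * u + u := by field_simp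
    rw [e1, e2]
    nlinarith [mul_nonneg (sub_nonneg.2 huv) (sub_nonneg.2 h3)]
  exact le_of_mul_le_mul_right h (by positivity)


lemma t_add_inv (ε : ℝ) (hε0 : 0 < ε) (hε1 : ε < 1) :
    (1 + Real.sqrt (1 - ε ^ 2)) / ε + ((1 + Real.sqrt (1 - ε ^ 2)) / ε)⁻¹ = 2 / ε := by
  set u : ℝ := Real.sqrt (1 - ε ^ 2) with hu
  have hu0 : 0 ≤ u := Real.sqrt_nonneg _
  have hu2 : u ^ 2 = 1 - ε ^ 2 := Real.sq_sqrt (by nlinarith)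
  have htinv : ((1 + u) / ε)⁻¹ = (1 - u) / ε := by
    have h : ((1 - u)/ε) * ((1 + u)/ε) = 1 := by
      field_simp; nlinarith
    exact inv_eq_of_mul_eq_one_left h
  rw [htinv, ← add_div]; ring_nf


set_option maxHeartbeats 1000000 in

lemma key_bound (M ε : ℝ) (hM : 1 < M) (hε0 : 0 < ε) (hε1 : ε < 1) (k : ℕ)
    (hk : Real.log ((1 + Real.sqrt (1 - ε ^ 2)) / ε) /
        Real.log ((Real.sqrt M + 1) / (Real.sqrt M - 1)) ≤ (k : ℝ))
    (y0 : ℝ) (hy0 : (M + 1) / (M - 1) ≤ y0) :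
    1 ≤ ε * (Polynomial.Chebyshev.T ℝ k).eval y0 := by
  have hM0 : 0 < M - 1 := by linarith
  have hsM : 1 < Real.sqrt M := by
    rw [show (1:ℝ) = Real.sqrt 1 by simp]
    exact Real.sqrt_lt_sqrt (by norm_num) hM
  have hsM2 : Real.sqrt M ^ 2 = M := Real.sq_sqrt (by linarith)
  have hsM0 : 0 < Real.sqrt M - 1 := by linarith
  set r : ℝ := (Real.sqrt M + 1) / (Real.sqrt M - 1) with hr
  have hr1 : 1 < r := by rw [hr, lt_div_iff₀ hsM0]; linarith
  set t : ℝ := (1 + Real.sqrt (1 - ε ^ 2)) / ε with ht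
  have hu0 : 0 ≤ Real.sqrt (1 - ε ^ 2) := Real.sqrt_nonneg _
  have ht1 : 1 < t := by rw [ht, lt_div_iff₀ hε0]; linarith
  -- y0 ≥ (M+1)/(M-1) > 1
  have hyM1 : 1 < (M + 1) / (M - 1) := by rw [lt_div_iff₀ hM0]; linarith
  have hy1 : 1 < y0 := lt_of_lt_of_le hyM1 hy0
  -- s0
  set s0 : ℝ := y0 + Real.sqrt (y0 ^ 2 - 1) with hs0def
  have hsq : Real.sqrt (y0 ^ 2 - 1) ^ 2 = y0 ^ 2 - 1 := Real.sq_sqrt (by nlinarith)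
  have hs01 : 1 < s0 := by
    have := Real.sqrt_nonneg (y0 ^ 2 - 1); rw [hs0def]; linarith
  have hs0inv : s0⁻¹ = y0 - Real.sqrt (y0 ^ 2 - 1) := by
    refine inv_eq_of_mul_eq_one_left ?_
    nlinarith
  have hy0eq : y0 = (s0 + s0⁻¹) / 2 := by rw [hs0inv, hs0def]; ring
  -- r = yM + sqrt(yM^2-1)
  have hrM : r = (M + 1) / (M - 1) + Real.sqrt (((M + 1) / (M - 1)) ^ 2 - 1) := by
    have h1 : ((M + 1) / (M - 1)) ^ 2 - 1 = (2 * Real.sqrt M / (M - 1)) ^ 2 := by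
      field_simp; nlinarith
    rw [h1, Real.sqrt_sq (by positivity), hr]
    rw [← add_div, div_eq_div_iff hsM0.ne' hM0.ne']
    nlinarith
  -- r ≤ s0
  have hrs0 : r ≤ s0 := by
    rw [hrM, hs0def]
    have : Real.sqrt (((M + 1) / (M - 1)) ^ 2 - 1) ≤ Real.sqrt (y0 ^ 2 - 1) :=
      Real.sqrt_le_sqrt (by nlinarith)
    linarith
  -- t ≤ r^k
  have hrk : t ≤ r ^ k := by
    have hlogr : 0 < Real.log r := Real.log_pos hr1
    have h1 : Real.log t ≤ (k : ℝ) * Real.log r := by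
      rw [div_le_iff₀ hlogr] at hk; linarith
    calc t = Real.exp (Real.log t) := (Real.exp_log (by linarith)).symm
      _ ≤ Real.exp ((k : ℝ) * Real.log r) := Real.exp_le_exp.2 h1
      _ = Real.exp (Real.log r) ^ k := by rw [← Real.exp_nat_mul]
      _ = r ^ k := by rw [Real.exp_log (by linarith)]
  -- chain
  have h2 : t + t⁻¹ ≤ s0 ^ k + (s0 ^ k)⁻¹ := by
    calc t + t⁻¹ ≤ r ^ k + (r ^ k)⁻¹ := add_inv_mono (le_of_lt ht1) hrk
      _ ≤ s0 ^ k + (s0 ^ k)⁻¹ := add_inv_mono (one_le_pow₀ hr1.le)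
          (pow_le_pow_left₀ (by linarith) hrs0 k)
  have heval : (Polynomial.Chebyshev.T ℝ k).eval y0 = (s0 ^ k + (s0 ^ k)⁻¹) / 2 := by
    rw [hy0eq, cheb_half s0 (by linarith) k, inv_pow]
  rw [heval]
  have h3 := t_add_inv ε hε0 hε1
  rw [← ht] at h3
  have : 2 / ε ≤ s0 ^ k + (s0 ^ k)⁻¹ := by rw [← h3]; exact h2
  rw [div_le_iff₀ hε0] at this
  nlinarith


lemma euclNorm_eq_norm {n : ℕ} (v : Fin n → ℝ) :
    euclNorm v = ‖(WithLp.equiv 2 (Fin n → ℝ)).symm v‖ := by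
  rw [EuclideanSpace.norm_eq, euclNorm]
  congr 1
  refine Finset.sum_congr rfl fun i _ => ?_
  show v i ^ 2 = ‖v i‖ ^ 2
  rw [Real.norm_eq_abs, sq_abs]


lemma euclNorm_mulVec_le {n : ℕ} (A : Matrix (Fin n) (Fin n) ℝ) (v : Fin n → ℝ) :
    euclNorm (A *ᵥ v) ≤ specNorm A * euclNorm v := by
  rw [euclNorm_eq_norm, euclNorm_eq_norm, WithLp.equiv_symm_apply, ← Matrix.toEuclideanLin_apply_piLp_toLp]
  exact (LinearMap.toContinuousLinearMap (Matrix.toEuclideanLin A)).le_opNorm _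


lemma euclNorm_smul {n : ℕ} (a : ℝ) (v : Fin n → ℝ) :
    euclNorm (a • v) = |a| * euclNorm v := by
  rw [euclNorm, euclNorm]
  have : ∑ i, (a • v) i ^ 2 = a ^ 2 * ∑ i, v i ^ 2 := by
    rw [Finset.mul_sum]; exact Finset.sum_congr rfl fun i _ => by simp [mul_pow]
  rw [this, Real.sqrt_mul (sq_nonneg a), Real.sqrt_sq_eq_abs]


lemma euclNorm_neg {n : ℕ} (v : Fin n → ℝ) : euclNorm (-v) = euclNorm v := by
  simp [euclNorm]


lemma euclNorm_sq {n : ℕ} (v : Fin n → ℝ) : euclNorm v ^ 2 = ∑ i, v i ^ 2 :=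
  Real.sq_sqrt (Finset.sum_nonneg fun i _ => sq_nonneg _)


lemma euclNorm_nonneg {n : ℕ} (v : Fin n → ℝ) : 0 ≤ euclNorm v := Real.sqrt_nonneg _


lemma sum_sq_eq_dot {n : ℕ} (v : Fin n → ℝ) : ∑ i, v i ^ 2 = v ⬝ᵥ v := by
  simp [dotProduct, pow_two]


lemma euclNorm_unitary {n : ℕ} (V : Matrix (Fin n) (Fin n) ℝ) (hV : Vᵀ * V = 1)
    (v : Fin n → ℝ) : euclNorm (V *ᵥ v) = euclNorm v := by
  rw [euclNorm, euclNorm]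
  congr 1
  rw [sum_sq_eq_dot, sum_sq_eq_dot]
  calc (V *ᵥ v) ⬝ᵥ (V *ᵥ v) = ((V *ᵥ v) ᵥ* V) ⬝ᵥ v := dotProduct_mulVec _ _ _
    _ = (v ᵥ* (Vᵀ * V)) ⬝ᵥ v := by rw [vecMul_mulVec]
    _ = v ⬝ᵥ v := by rw [hV, vecMul_one]


lemma euclNorm_diagonal_le {n : ℕ} (d : Fin n → ℝ) (ε : ℝ) (hε : 0 ≤ ε)
    (hd : ∀ i, |d i| ≤ ε) (w : Fin n → ℝ) :
    euclNorm (diagonal d *ᵥ w) ≤ ε * euclNorm w := by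
  rw [euclNorm, euclNorm, ← Real.sqrt_sq hε, ← Real.sqrt_mul (sq_nonneg ε)]
  refine Real.sqrt_le_sqrt ?_
  rw [Finset.mul_sum]
  refine Finset.sum_le_sum fun i _ => ?_
  rw [mulVec_diagonal]
  calc (d i * w i) ^ 2 = d i ^ 2 * w i ^ 2 := by ring
    _ ≤ ε ^ 2 * w i ^ 2 := by
        have := hd i
        have h2 : d i ^ 2 ≤ ε ^ 2 := by nlinarith [abs_nonneg (d i), sq_abs (d i)]
        nlinarith [sq_nonneg (w i)]


lemma aeval_diagonal' {n : ℕ} (d : Fin n → ℝ) (q : ℝ[X]) :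
    Polynomial.aeval (Matrix.diagonal d) q = Matrix.diagonal (fun i => q.eval (d i)) := by
  induction q using Polynomial.induction_on' with
  | add p q hp hq =>
    rw [map_add, hp, hq, Matrix.diagonal_add]
    congr 1; funext i; simp
  | monomial m a =>
    rw [aeval_monomial, diagonal_pow, Matrix.algebraMap_eq_diagonal,
      diagonal_mul_diagonal]
    congr 1; funext i
    simp [eval_monomial, Pi.algebraMap_apply]


lemma myConjPow {n : ℕ} (U B : Matrix (Fin n) (Fin n) ℝ) (hU : star U * U = 1) (m : ℕ) :
    (U * B * star U) ^ m = U * B ^ m * star U := by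
  induction m with
  | zero =>
    have hU' : U * star U = 1 := mul_eq_one_comm.mp hU
    simp only [pow_zero, mul_one, hU']
  | succ m ih =>
    rw [pow_succ, pow_succ, ih]
    simp only [mul_assoc]
    rw [← mul_assoc (star U) U, hU, one_mul]


lemma myAevalConj {n : ℕ} (U B : Matrix (Fin n) (Fin n) ℝ) (hU : star U * U = 1) (q : ℝ[X]) :
    Polynomial.aeval (U * B * star U) q = U * Polynomial.aeval B q * star U := by
  induction q using Polynomial.induction_on' with
  | add p q hp hq => rw [map_add, hp, hq, map_add, mul_add, add_mul]
  | monomial m a =>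
    rw [aeval_monomial, aeval_monomial, myConjPow U B hU]
    simp only [← Algebra.smul_def, Matrix.smul_mul, Matrix.mul_smul]


lemma sum_mulVec' {n : ℕ} {ι : Type*} (s : Finset ι) (f : ι → Matrix (Fin n) (Fin n) ℝ)
    (b : Fin n → ℝ) : (∑ i ∈ s, f i) *ᵥ b = ∑ i ∈ s, f i *ᵥ b :=
  map_sum (Matrix.mulVec.addMonoidHomLeft b) f s


lemma krylov_of_poly {n k : ℕ} (hk1 : 1 ≤ k) (ε : ℝ) (hε : 0 ≤ ε)
    (A : Matrix (Fin n) (Fin n) ℝ) (hA : A.IsHermitian) (b : Fin n → ℝ)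
    (q : ℝ[X]) (hq0 : q.eval 0 = 1) (hdeg : q.natDegree ≤ k)
    (hqev : ∀ i, |q.eval (hA.eigenvalues i)| ≤ ε) :
    ∃ x ∈ Submodule.span ℝ (Set.range fun i : Fin k => (A ^ (i : ℕ)).mulVec b),
      euclNorm (A.mulVec x - b) ≤ ε * euclNorm b := by
  classical
  set p : ℝ[X] := -q.divX with hp
  have hpdeg : p.natDegree < k := by
    rw [hp, natDegree_neg, natDegree_divX_eq_natDegree_tsub_one]
    omega
  refine ⟨(Polynomial.aeval A p).mulVec b, ?_, ?_⟩
  · rw [Polynomial.aeval_eq_sum_range' hpdeg, sum_mulVec']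
    refine Submodule.sum_mem _ fun i hi => ?_
    rw [smul_mulVec]
    refine Submodule.smul_mem _ _ (Submodule.subset_span ?_)
    exact ⟨⟨i, Finset.mem_range.mp hi⟩, rfl⟩
  · -- residual
    have hqX : X * q.divX + C 1 = q := by
      rw [← hq0, ← Polynomial.coeff_zero_eq_eval_zero]
      exact Polynomial.X_mul_divX_add q
    have haq : Polynomial.aeval A q = A * Polynomial.aeval A q.divX + 1 := by
      conv_lhs => rw [← hqX]
      rw [map_add, _root_.map_mul, Polynomial.aeval_X, Polynomial.C_1, _root_.map_one]
    have hres : A *ᵥ ((Polynomial.aeval A p) *ᵥ b) - b = -((Polynomial.aeval A q) *ᵥ b) := by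
      rw [mulVec_mulVec]
      have h1 : A * Polynomial.aeval A p = 1 - Polynomial.aeval A q := by
        rw [hp, map_neg, mul_neg, haq]; abel
      rw [h1, sub_mulVec, one_mulVec]
      abel
    rw [hres, euclNorm_neg]
    -- spectral estimate
    set U : Matrix (Fin n) (Fin n) ℝ := (hA.eigenvectorUnitary : Matrix (Fin n) (Fin n) ℝ)
      with hUdef
    have hU1 : U * star U = 1 := (Matrix.mem_unitaryGroup_iff).mp hA.eigenvectorUnitary.2
    have hU2 : star U * U = 1 := mul_eq_one_comm.mp hU1
    have hspec : A = U * diagonal hA.eigenvalues * star U := by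
      have := hA.spectral_theorem
      rwa [RCLike.ofReal_real_eq_id, Function.id_comp] at this
    have haev : Polynomial.aeval A q
        = U * diagonal (fun i => q.eval (hA.eigenvalues i)) * star U := by
      conv_lhs => rw [hspec]
      rw [myAevalConj _ _ hU2, aeval_diagonal']
    rw [haev]
    have hstar : star U = Uᵀ := Matrix.conjTranspose_eq_transpose_of_trivial U
    rw [← mulVec_mulVec, ← mulVec_mulVec]
    rw [euclNorm_unitary U (by rw [← hstar]; exact hU2)]
    calc euclNorm (diagonal (fun i => q.eval (hA.eigenvalues i)) *ᵥ (star U *ᵥ b))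
        ≤ ε * euclNorm (star U *ᵥ b) := euclNorm_diagonal_le _ ε hε hqev _
      _ = ε * euclNorm b := by
          rw [hstar, euclNorm_unitary Uᵀ (by rw [transpose_transpose, ← hstar]; exact hU1)]


lemma euclNorm_coe {n : ℕ} (x : EuclideanSpace ℝ (Fin n)) : euclNorm (⇑x) = ‖x‖ := by
  rw [EuclideanSpace.norm_eq, euclNorm]
  congr 1
  refine Finset.sum_congr rfl fun i _ => ?_
  rw [Real.norm_eq_abs, sq_abs]


lemma eigen_bounds {n : ℕ} {A : Matrix (Fin n) (Fin n) ℝ} (hA : A.PosDef) (i : Fin n) :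
    hA.1.eigenvalues i ≤ specNorm A ∧ (specNorm A⁻¹)⁻¹ ≤ hA.1.eigenvalues i ∧
      0 < specNorm A⁻¹ := by
  classical
  set lam := hA.1.eigenvalues i with hlam
  have hpos : 0 < lam := hA.eigenvalues_pos i
  set v : Fin n → ℝ := ⇑(hA.1.eigenvectorBasis i) with hv
  have hnv : euclNorm v = 1 := by
    rw [hv, euclNorm_coe, hA.1.eigenvectorBasis.orthonormal.1 i]
  have hmul : A *ᵥ v = lam • v := hA.1.mulVec_eigenvectorBasis i
  have h1 : lam ≤ specNorm A := by
    have := euclNorm_mulVec_le A v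
    rw [hmul, euclNorm_smul, hnv, abs_of_pos hpos] at this
    simpa using this
  have hdet : IsUnit A.det := (ne_of_gt hA.det_pos).isUnit
  have hinv : A⁻¹ *ᵥ v = lam⁻¹ • v := by
    have h2 : A⁻¹ *ᵥ (A *ᵥ v) = v := by
      rw [mulVec_mulVec, Matrix.nonsing_inv_mul A hdet, one_mulVec]
    rw [hmul, mulVec_smul] at h2
    have := congrArg (fun w => lam⁻¹ • w) h2
    simp only [smul_smul, inv_mul_cancel₀ hpos.ne', one_smul] at this
    exact this
  have h3 : lam⁻¹ ≤ specNorm A⁻¹ := by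
    have := euclNorm_mulVec_le A⁻¹ v
    rw [hinv, euclNorm_smul, hnv, abs_of_pos (inv_pos.2 hpos)] at this
    simpa using this
  have h4 : 0 < specNorm A⁻¹ := lt_of_lt_of_le (inv_pos.2 hpos) h3
  refine ⟨h1, ?_, h4⟩
  exact inv_le_of_inv_le₀ hpos h3


/-- **Step count of the minimal residual algorithm on the class `F₁`.**
Let `A` be symmetric positive definite with condition number `‖A‖·‖A⁻¹‖ ≤ M` and let
`‖b‖ = 1`.  If `k ≥ ln((1+√(1−ε²))/ε) / ln((√M+1)/(√M−1))` then the Krylov subspace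
`span{b, Ab, …, A^{k−1}b}` contains a vector `x` with residual `‖Ax − b‖ ≤ ε`. -/
theorem stmt_12 (n : ℕ) (M ε : ℝ) (hM : 1 < M) (hε : ε ∈ Set.Ioo (0 : ℝ) 1)
    (A : Matrix (Fin n) (Fin n) ℝ) (hA : A.PosDef)
    (hcond : specNorm A * specNorm A⁻¹ ≤ M)
    (b : Fin n → ℝ) (hb : euclNorm b = 1) (k : ℕ)
    (hk : Real.log ((1 + Real.sqrt (1 - ε ^ 2)) / ε) /
        Real.log ((Real.sqrt M + 1) / (Real.sqrt M - 1)) ≤ (k : ℝ)) :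
    ∃ x ∈ Submodule.span ℝ (Set.range fun i : Fin k => (A ^ (i : ℕ)).mulVec b),
      euclNorm (A.mulVec x - b) ≤ ε := by
  classical
  obtain ⟨hε0, hε1⟩ := hε
  -- k ≥ 1
  have hsM : 1 < Real.sqrt M := by
    rw [show (1:ℝ) = Real.sqrt 1 by simp]
    exact Real.sqrt_lt_sqrt (by norm_num) hM
  have hr1 : 1 < (Real.sqrt M + 1) / (Real.sqrt M - 1) := by
    rw [lt_div_iff₀ (by linarith)]; linarith
  have ht1 : 1 < (1 + Real.sqrt (1 - ε ^ 2)) / ε := by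
    rw [lt_div_iff₀ hε0]
    have := Real.sqrt_nonneg (1 - ε ^ 2)
    linarith
  have hk1 : 1 ≤ k := by
    have hpos : (0:ℝ) < Real.log ((1 + Real.sqrt (1 - ε ^ 2)) / ε) /
        Real.log ((Real.sqrt M + 1) / (Real.sqrt M - 1)) :=
      div_pos (Real.log_pos ht1) (Real.log_pos hr1)
    have : (0:ℝ) < (k : ℝ) := lt_of_lt_of_le hpos hk
    exact_mod_cast Nat.cast_pos.mp this
  -- n > 0
  have hn : 0 < n := by
    rcases Nat.eq_zero_or_pos n with h | h
    · subst h; simp [euclNorm] at hb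
    · exact h
  have i0 : Fin n := ⟨0, hn⟩
  -- eigenvalue bounds
  set c := specNorm A with hc
  set sI := specNorm A⁻¹ with hsIdef
  set a := sI⁻¹ with hadef
  have hbnd : ∀ i, hA.1.eigenvalues i ≤ c ∧ a ≤ hA.1.eigenvalues i ∧ 0 < sI :=
    fun i => eigen_bounds hA i
  have hsI : 0 < sI := (hbnd i0).2.2
  have ha0 : 0 < a := inv_pos.2 hsI
  have hac : a ≤ c := le_trans (hbnd i0).2.1 (hbnd i0).1
  have hc0 : 0 < c := lt_of_lt_of_le ha0 hac
  have hcMa : c ≤ M * a := by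
    have h1 : c = (c * sI) * a := by
      rw [hadef, mul_assoc, mul_inv_cancel₀ hsI.ne', mul_one]
    rw [h1]
    exact mul_le_mul_of_nonneg_right hcond ha0.le
  -- construct the polynomial q
  have hmain : ∃ q : ℝ[X], q.eval 0 = 1 ∧ q.natDegree ≤ k ∧
      ∀ i, |q.eval (hA.1.eigenvalues i)| ≤ ε := by
    rcases eq_or_lt_of_le hac with heq | hlt
    · -- a = c : all eigenvalues equal a
      refine ⟨1 - C a⁻¹ * X, by simp, ?_, ?_⟩
      · refine le_trans (natDegree_sub_le _ _) ?_
        have h2 : ((C a⁻¹ : ℝ[X]) * X).natDegree ≤ 1 :=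
          le_trans natDegree_mul_le (by simp)
        simp only [natDegree_one, max_le_iff]
        omega
      · intro i
        have h1 : hA.1.eigenvalues i = a :=
          le_antisymm (heq ▸ (hbnd i).1) (hbnd i).2.1
        rw [h1]
        simp [inv_mul_cancel₀ ha0.ne', le_of_lt hε0]
    · -- a < c : Chebyshev polynomial
      have hca : 0 < c - a := by linarith
      set y0 : ℝ := (c + a) / (c - a) with hy0def
      have hy0 : (M + 1) / (M - 1) ≤ y0 := by
        rw [hy0def, div_le_div_iff₀ (by linarith) hca]
        nlinarith
      set τ : ℝ := (Polynomial.Chebyshev.T ℝ k).eval y0 with hτdef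
      have hτ : 1 ≤ ε * τ := key_bound M ε hM hε0 hε1 k hk y0 hy0
      have hτ0 : 0 < τ := by nlinarith
      have hτε : τ⁻¹ ≤ ε := by
        rw [inv_eq_one_div, div_le_iff₀ hτ0]; linarith
      refine ⟨C τ⁻¹ * ((Polynomial.Chebyshev.T ℝ k).comp (C y0 - C (2/(c-a)) * X)),
        ?_, ?_, ?_⟩
      · rw [eval_mul, eval_C, eval_comp]
        simp only [eval_sub, eval_mul, eval_C, eval_X, mul_zero, sub_zero]
        rw [← hτdef]
        exact inv_mul_cancel₀ hτ0.ne'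
      · refine le_trans (natDegree_C_mul_le _ _) ?_
        rw [natDegree_comp]
        have hlin : (C y0 - C (2/(c-a)) * X).natDegree ≤ 1 := by
          refine le_trans (natDegree_sub_le _ _) ?_
          have h2 : ((C (2/(c-a)) : ℝ[X]) * X).natDegree ≤ 1 :=
            le_trans natDegree_mul_le (by simp)
          simp only [natDegree_C, max_le_iff]
          omega
        calc (Polynomial.Chebyshev.T ℝ k).natDegree * (C y0 - C (2/(c-a)) * X).natDegree
            ≤ k * 1 := Nat.mul_le_mul (cheb_natDegree_le k) hlin
          _ = k := mul_one k
      · intro i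
        set lam := hA.1.eigenvalues i with hlam
        have h1 : a ≤ lam := (hbnd i).2.1
        have h2 : lam ≤ c := (hbnd i).1
        have he : y0 - 2/(c-a) * lam = (c + a - 2*lam)/(c-a) := by
          rw [hy0def]; field_simp
        have hx : y0 - 2/(c-a) * lam ∈ Set.Icc (-1 : ℝ) 1 := by
          rw [he]
          constructor
          · rw [le_div_iff₀ hca]; nlinarith
          · rw [div_le_one hca]; nlinarith
        rw [eval_mul, eval_C, eval_comp]
        simp only [eval_sub, eval_mul, eval_C, eval_X]
        rw [abs_mul, abs_of_pos (inv_pos.2 hτ0)]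
        calc τ⁻¹ * |(Polynomial.Chebyshev.T ℝ k).eval (y0 - 2/(c-a) * lam)|
            ≤ τ⁻¹ * 1 := by
              refine mul_le_mul_of_nonneg_left ?_ (inv_nonneg.2 hτ0.le)
              exact cheb_abs_le _ hx k
          _ = τ⁻¹ := mul_one _
          _ ≤ ε := hτε
  obtain ⟨q, hq0, hdeg, hqev⟩ := hmain
  obtain ⟨x, hmem, hle⟩ := krylov_of_poly hk1 ε hε0.le A hA.1 b q hq0 hdeg hqev
  refine ⟨x, hmem, ?_⟩
  rwa [hb, mul_one] at hle
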